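/- Let H be a connected simple graph and let T be a spanning tree of H whose maximum degree Δ(T) is smallest among all spanning trees of H. If T has a unique vertex v of maximum degree and every other vertex of T has degree at most Δ(T) − 2, then the graph H − v has exactly Δ(T) connected components. -/

import Mathlib

/-- A set of vertices is independent: pairwise nonadjacent. -/
def IndepSet {V : Type*} (G : SimpleGraph V) (s : Set V) : Prop :=
  s.Pairwise fun u v => ¬ G.Adj u v

/-- The independence number of a graph: the maximum size of an independent set. -/
noncomputable def indepNum {V : Type*} (G : SimpleGraph V) : ℕ :=
  sSup {n | ∃ t : Finset V, IndepSet G ↑t ∧ t.card = n}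

/-- An edge-colored graph is properly connected if between every pair of distinct
vertices there is a path in which no two consecutive edges have the same color. -/
def ProperlyConnected {V : Type*} (G : SimpleGraph V) (c : Sym2 V → ℕ) : Prop :=
  ∀ u v : V, u ≠ v → ∃ p : G.Walk u v, p.IsPath ∧ (p.edges.map c).Chain' (· ≠ ·)

/-- The optimal proper connection number of a monochromatic graph `G` (all edges
initially colored `1`): the minimum of `p + q` over all final colorings `c` making
`G` properly connected, where `p` is the number of recolored edges (edges whose
color is no longer `1`) and `q` is the number of distinct new colors used. -/
noncomputable def pcOpt {V : Type*} (G : SimpleGraph V) : ℕ :=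
  sInf {n | ∃ c : Sym2 V → ℕ, ProperlyConnected G c ∧
    n = {e | e ∈ G.edgeSet ∧ c e ≠ 1}.ncard
      + (c '' {e | e ∈ G.edgeSet ∧ c e ≠ 1}).ncard}

/-- The degree of a vertex. -/
noncomputable def vdeg {V : Type*} (G : SimpleGraph V) (v : V) : ℕ :=
  (G.neighborSet v).ncard

/-- The maximum degree of a graph. -/
noncomputable def maxDeg {V : Type*} (G : SimpleGraph V) : ℕ :=
  sSup {n | ∃ v, vdeg G v = n}

/-- A connected graph is α-minimal if every vertex is either a cut-vertex or its
deletion decreases the independence number. -/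
def AlphaMinimal {V : Type*} (G : SimpleGraph V) : Prop :=
  G.Connected ∧ ∀ v : V,
    ¬ (G.induce ({v}ᶜ : Set V)).Connected ∨
      indepNum (G.induce ({v}ᶜ : Set V)) < indepNum G

open SimpleGraph

section Aux
variable {V : Type*}

private lemma reach_induce_of_walk {G : SimpleGraph V} {S : Set V} :
    ∀ {x y : V} (p : G.Walk x y), (∀ z ∈ p.support, z ∈ S) →
      ∀ (hx : x ∈ S) (hy : y ∈ S), (G.induce S).Reachable ⟨x, hx⟩ ⟨y, hy⟩ := by
  intro x y p
  induction p with
  | nil => intro _ hx hy; exact Reachable.refl _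
  | @cons a c b h q ih =>
      intro hsup hx hy
      have hc : c ∈ S := hsup c (by simp)
      have h1 : (G.induce S).Adj ⟨a, hx⟩ ⟨c, hc⟩ := by simpa using h
      exact h1.reachable.trans (ih (fun z hz => hsup z (by simp [hz])) hc hy)

private lemma exists_path_of_induce_reach {G : SimpleGraph V} {S : Set V} {a b : ↥S}
    (h : (G.induce S).Reachable a b) :
    ∃ p : G.Walk a.val b.val, p.IsPath ∧ ∀ z ∈ p.support, z ∈ S := by
  classical
  obtain ⟨q⟩ := h
  refine ⟨q.toPath.val.map (Embedding.induce S).toHom,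
    Walk.map_isPath_of_injective (fun u w huw => Subtype.ext huw) q.toPath.2, ?_⟩
  intro z hz
  have hz : z ∈ q.toPath.val.support.map (Embedding.induce (G := G) S).toHom := by
    rw [← Walk.support_map]; exact hz
  rw [List.mem_map] at hz
  obtain ⟨u, -, rfl⟩ := hz
  exact u.2

private lemma reach_of_walk_adj {W : Type*} {A B : SimpleGraph W}
    (h : ∀ p q : W, A.Adj p q → B.Reachable p q) :
    ∀ {p q : W}, A.Walk p q → B.Reachable p q := by
  intro p q w
  induction w with
  | nil => exact Reachable.refl _
  | cons ha _ ih => exact (h _ _ ha).trans ih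

private lemma reach_delete_of_walk {G : SimpleGraph V} {x y : V}
    (hr : (G.deleteEdges {s(x, y)}).Reachable x y) :
    ∀ {p q : V}, G.Walk p q → (G.deleteEdges {s(x, y)}).Reachable p q := by
  intro p q w
  induction w with
  | nil => exact Reachable.refl _
  | @cons a c b h _ ih =>
      by_cases he : s(a, c) = s(x, y)
      · rcases Sym2.eq_iff.mp he with ⟨rfl, rfl⟩ | ⟨rfl, rfl⟩
        · exact hr.trans ih
        · exact hr.symm.trans ih
      · exact (Adj.reachable (by rw [deleteEdges_adj]; exact ⟨h, by simpa using he⟩)).trans ih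

private lemma exists_spanning_tree [Fintype V] :
    ∀ (n : ℕ) (G : SimpleGraph V), G.edgeSet.ncard = n → G.Connected →
      ∃ T, T ≤ G ∧ T.IsTree := by
  intro n
  induction n using Nat.strong_induction_on with
  | _ n ih =>
    intro G hn hG
    by_cases hac : G.IsAcyclic
    · exact ⟨G, le_rfl, ⟨hG, hac⟩⟩
    · rw [IsAcyclic] at hac
      push_neg at hac
      obtain ⟨u0, c, hc⟩ := hac
      cases c with
      | nil => exact absurd hc Walk.IsCycle.not_of_nil
      | @cons _ w _ h q =>
        have he : s(u0, w) ∈ (Walk.cons h q).edges := by simp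
        have hr : (G \ fromEdgeSet {s(u0, w)}).Reachable u0 w :=
          (adj_and_reachable_delete_edges_iff_exists_cycle.mpr ⟨u0, _, hc, he⟩).2
        have hdel : G \ fromEdgeSet {s(u0, w)} = G.deleteEdges {s(u0, w)} := rfl
        rw [hdel] at hr
        have hconn : (G.deleteEdges {s(u0, w)}).Connected := by
          rw [connected_iff]
          refine ⟨fun p q => ?_, hG.nonempty⟩
          obtain ⟨wpq⟩ := hG.preconnected p q
          exact reach_delete_of_walk hr wpq
        have hcard : (G.deleteEdges {s(u0, w)}).edgeSet.ncard < n := by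
          have hE : (G.deleteEdges {s(u0, w)}).edgeSet = G.edgeSet \ {s(u0, w)} := by
            simp [deleteEdges]
          rw [hE, ← hn, Set.ncard_diff_singleton_of_mem (G.mem_edgeSet.mpr h)]
          have hpos : 0 < G.edgeSet.ncard :=
            (Set.ncard_pos (Set.toFinite _)).mpr ⟨s(u0, w), G.mem_edgeSet.mpr h⟩
          omega
        obtain ⟨T, hT1, hT2⟩ := ih _ hcard _ rfl hconn
        exact ⟨T, hT1.trans (deleteEdges_le _), hT2⟩

end Aux

/-- Let `T` be a spanning tree of a connected graph `H` whose maximum degree is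
smallest among all spanning trees. If `T` has a unique vertex `v` of maximum
degree and every other vertex has degree at most `Δ(T) − 2`, then `H − v` has
exactly `Δ(T)` connected components. -/
theorem components_of_delete_max_degree_vertex {V : Type*} [Fintype V]
    (H : SimpleGraph V) (hH : H.Connected) (T : SimpleGraph V)
    (hTle : T ≤ H) (hT : T.IsTree)
    (hmin : ∀ T' : SimpleGraph V, T' ≤ H → T'.IsTree → maxDeg T ≤ maxDeg T')
    (v : V) (hv : vdeg T v = maxDeg T)
    (huniq : ∀ w : V, w ≠ v → vdeg T w ≤ maxDeg T - 2) :
    Nat.card ((H.induce ({v}ᶜ : Set V)).ConnectedComponent) = maxDeg T := by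
  classical
  set S : Set V := ({v}ᶜ : Set V) with hS
  by_cases hsing : ∀ w : V, w = v
  · haveI hSempty : IsEmpty ↥S :=
      ⟨fun w => (Set.mem_compl_singleton_iff.mp w.2) (hsing w.val)⟩
    have hdeg0 : vdeg T v = 0 := by
      have hns : T.neighborSet v = ∅ := by
        ext u
        simp only [mem_neighborSet, Set.mem_empty_iff_false, iff_false]
        intro h
        exact h.ne' (hsing u)
      simp [vdeg, hns]
    rw [Nat.card_of_isEmpty, ← hv, hdeg0]
  · push_neg at hsing
    obtain ⟨u0, hu0⟩ := hsing
    have hA : ∀ u : V, vdeg T u ≤ maxDeg T := by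
      intro u
      refine le_csSup ⟨Fintype.card V, ?_⟩ ⟨u, rfl⟩
      rintro n ⟨w, rfl⟩
      calc vdeg T w ≤ (Set.univ : Set V).ncard :=
            Set.ncard_le_ncard (Set.subset_univ _) (Set.toFinite _)
        _ = Fintype.card V := by rw [Set.ncard_univ, Nat.card_eq_fintype_card]
    have hdegpos : ∀ u : V, u ≠ v → 1 ≤ vdeg T u := by
      intro u hne
      obtain ⟨p⟩ := hT.isConnected.preconnected u v
      cases p with
      | nil => exact absurd rfl hne
      | cons h q => exact (Set.ncard_pos (Set.toFinite _)).mpr ⟨_, h⟩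
    have hΔ3 : 3 ≤ maxDeg T := by
      have h1 := hdegpos u0 hu0
      have h2 := huniq u0 hu0
      omega
    -- every vertex ≠ v reaches a neighbor of v within the induced graph
    have L2 : ∀ (u : V) (hu : u ∈ S), ∃ (x : V) (hx : T.Adj v x),
        (T.induce S).Reachable ⟨u, hu⟩ ⟨x, Set.mem_compl_singleton_iff.mpr hx.ne'⟩ := by
      intro u hu
      have hune : u ≠ v := by rwa [hS, Set.mem_compl_singleton_iff] at hu
      obtain ⟨p, hp, -⟩ := hT.existsUnique_path v u
      cases p with
      | nil => exact absurd rfl hune.symm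
      | @cons _ x _ h q =>
        rw [Walk.cons_isPath_iff] at hp
        refine ⟨x, h, ?_⟩
        exact (reach_induce_of_walk q
          (fun z hz => Set.mem_compl_singleton_iff.mpr (fun hzv => hp.2 (by rw [← hzv]; exact hz))) _ hu).symm
    -- distinct neighbors of v lie in distinct components of T - v
    have nb_inj : ∀ (x y : V) (hx : T.Adj v x) (hy : T.Adj v y)
        (hx' : x ∈ S) (hy' : y ∈ S),
        (T.induce S).Reachable ⟨x, hx'⟩ ⟨y, hy'⟩ → x = y := by
      intro x y hx hy hx' hy' hr
      by_contra hne
      obtain ⟨p, hp, hps⟩ := exists_path_of_induce_reach hr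
      have hvp : v ∉ p.support := fun hmem => by
        have := hps v hmem
        rw [hS, Set.mem_compl_singleton_iff] at this
        exact this rfl
      have hq : (Walk.cons hx.symm (Walk.cons hy .nil) : T.Walk x y).IsPath := by
        simp [Walk.isPath_def, hx.ne', hy.ne', hy.ne, hne]
      have heq := (hT.existsUnique_path x y).unique hp hq
      rw [heq] at hvp
      simp at hvp
    -- number of components of T - v equals maxDeg T
    have cardT : Nat.card ((T.induce S).ConnectedComponent) = maxDeg T := by
      have hb : Function.Bijective (fun x : ↥(T.neighborSet v) =>
          (T.induce S).connectedComponentMk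
            ⟨x.val, Set.mem_compl_singleton_iff.mpr x.2.ne'⟩) := by
        constructor
        · rintro ⟨x, hx⟩ ⟨y, hy⟩ hxy
          rw [ConnectedComponent.eq] at hxy
          exact Subtype.ext (nb_inj x y hx hy _ _ hxy)
        · intro c
          refine c.ind ?_
          rintro ⟨u, hu⟩
          obtain ⟨x, hx, hrx⟩ := L2 u hu
          exact ⟨⟨x, hx⟩, ConnectedComponent.eq.mpr hrx.symm⟩
      rw [← Nat.card_eq_of_bijective _ hb, Nat.card_coe_set_eq, ← hv]
      rfl
    -- crucial claim: H-edges inside S do not join distinct components of T - v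
    have crucial : ∀ (a b : ↥S), H.Adj a.val b.val → (T.induce S).Reachable a b := by
      rintro ⟨a, ha⟩ ⟨b, hb⟩ hadj
      by_contra hnr
      have hav : a ≠ v := by rwa [hS, Set.mem_compl_singleton_iff] at ha
      have hbv : b ≠ v := by rwa [hS, Set.mem_compl_singleton_iff] at hb
      have hab : a ≠ b := hadj.ne
      obtain ⟨x, hvx, hrax⟩ := L2 a ha
      obtain ⟨y, hvy, hrby⟩ := L2 b hb
      have hxy : x ≠ y := by
        rintro rfl
        exact hnr (hrax.trans hrby.symm)
      set T2 : SimpleGraph V := T.deleteEdges {s(v, x)} ⊔ fromEdgeSet {s(a, b)} with hT2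
      have T2adj : ∀ p q : V, T2.Adj p q ↔
          (T.Adj p q ∧ s(p, q) ≠ s(v, x)) ∨ (s(p, q) = s(a, b) ∧ p ≠ q) := by
        intro p q
        rw [hT2, sup_adj, deleteEdges_adj, fromEdgeSet_adj]
        simp
      have hT2H : T2 ≤ H := by
        apply sup_le
        · exact (T.deleteEdges_le _).trans hTle
        · intro p q hpq
          rw [fromEdgeSet_adj, Set.mem_singleton_iff, Sym2.eq_iff] at hpq
          rcases hpq.1 with ⟨h1, h2⟩ | ⟨h1, h2⟩
          · rw [h1, h2]; exact hadj
          · rw [h1, h2]; exact hadj.symm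
      have hmap : ∀ (p q : ↥S), (T.induce S).Adj p q → T2.Adj p.val q.val := by
        rintro ⟨p1, hp1⟩ ⟨q1, hq1⟩ h1
        have h2 : T.Adj p1 q1 := by simpa using h1
        rw [T2adj]
        refine Or.inl ⟨h2, ?_⟩
        intro hcon
        rcases Sym2.eq_iff.mp hcon with ⟨h1, -⟩ | ⟨-, h1⟩
        · exact (Set.mem_compl_singleton_iff.mp hp1) h1
        · exact (Set.mem_compl_singleton_iff.mp hq1) h1
      have transfer : ∀ {p q : ↥S}, (T.induce S).Reachable p q →
          T2.Reachable p.val q.val := by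
        intro p q hr
        exact hr.map ⟨fun r => r.val, fun {r1 r2} h => hmap r1 r2 h⟩
      have hadj_vy : T2.Adj v y := by
        rw [T2adj]
        refine Or.inl ⟨hvy, ?_⟩
        intro hcon
        rcases Sym2.eq_iff.mp hcon with ⟨-, h1⟩ | ⟨h1, -⟩
        · exact hxy h1.symm
        · exact hvx.ne h1
      have hadj_ba : T2.Adj b a := by
        rw [T2adj]
        exact Or.inr ⟨Sym2.eq_swap, hab.symm⟩
      have hvb : T2.Reachable v b := hadj_vy.reachable.trans (transfer hrby.symm)
      have hva : T2.Reachable v a := hvb.trans hadj_ba.reachable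
      have hvx2 : T2.Reachable v x := hva.trans (transfer hrax)
      have hreach : ∀ u : V, T2.Reachable v u := by
        intro u
        by_cases huv : u = v
        · rw [huv]
        · obtain ⟨z, hvz, hruz⟩ := L2 u (Set.mem_compl_singleton_iff.mpr huv)
          by_cases hzx : z = x
          · subst hzx
            exact hvx2.trans (transfer hruz.symm)
          · have hadj_vz : T2.Adj v z := by
              rw [T2adj]
              refine Or.inl ⟨hvz, ?_⟩
              intro hcon
              rcases Sym2.eq_iff.mp hcon with ⟨-, h1⟩ | ⟨h1, -⟩
              · exact hzx h1
              · exact hvx.ne h1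
            exact hadj_vz.reachable.trans (transfer hruz.symm)
      have hT2conn : T2.Connected := by
        rw [connected_iff]
        exact ⟨fun p q => (hreach p).symm.trans (hreach q), ⟨v⟩⟩
      have hdeg2 : ∀ u : V, vdeg T2 u ≤ maxDeg T - 1 := by
        intro u
        by_cases huv : u = v
        · subst huv
          have hsub : T2.neighborSet u ⊆ T.neighborSet u \ {x} := by
            intro q hq
            rw [mem_neighborSet, T2adj] at hq
            rcases hq with ⟨hq1, hq2⟩ | ⟨hq1, -⟩
            · refine ⟨hq1, ?_⟩
              rw [Set.mem_singleton_iff]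
              rintro rfl
              exact hq2 rfl
            · rw [Sym2.eq_iff] at hq1
              rcases hq1 with ⟨h1, -⟩ | ⟨h1, -⟩
              · exact absurd h1.symm hav
              · exact absurd h1.symm hbv
          calc vdeg T2 u ≤ (T.neighborSet u \ {x}).ncard :=
                Set.ncard_le_ncard hsub (Set.toFinite _)
            _ = vdeg T u - 1 := by
                rw [show vdeg T u = (T.neighborSet u).ncard from rfl,
                  Set.ncard_diff_singleton_of_mem
                    (show x ∈ T.neighborSet u from hvx)]
            _ ≤ maxDeg T - 1 := by rw [hv]
        · have hu2 := huniq u huv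
          by_cases hua : u = a
          · subst hua
            have hsub : T2.neighborSet u ⊆ insert b (T.neighborSet u) := by
              intro q hq
              rw [mem_neighborSet, T2adj] at hq
              rcases hq with ⟨hq1, -⟩ | ⟨hq1, -⟩
              · exact Set.mem_insert_of_mem _ hq1
              · rw [Sym2.eq_iff] at hq1
                rcases hq1 with ⟨-, rfl⟩ | ⟨h1, -⟩
                · exact Set.mem_insert _ _
                · exact absurd h1 hab
            calc vdeg T2 u ≤ (insert b (T.neighborSet u)).ncard :=
                  Set.ncard_le_ncard hsub (Set.toFinite _)
              _ ≤ vdeg T u + 1 := Set.ncard_insert_le _ _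
              _ ≤ maxDeg T - 1 := by omega
          · by_cases hub : u = b
            · subst hub
              have hsub : T2.neighborSet u ⊆ insert a (T.neighborSet u) := by
                intro q hq
                rw [mem_neighborSet, T2adj] at hq
                rcases hq with ⟨hq1, -⟩ | ⟨hq1, -⟩
                · exact Set.mem_insert_of_mem _ hq1
                · rw [Sym2.eq_iff] at hq1
                  rcases hq1 with ⟨h1, -⟩ | ⟨-, rfl⟩
                  · exact absurd h1.symm hab
                  · exact Set.mem_insert _ _
              calc vdeg T2 u ≤ (insert a (T.neighborSet u)).ncard :=
                    Set.ncard_le_ncard hsub (Set.toFinite _)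
                _ ≤ vdeg T u + 1 := Set.ncard_insert_le _ _
                _ ≤ maxDeg T - 1 := by omega
            · have hsub : T2.neighborSet u ⊆ T.neighborSet u := by
                intro q hq
                rw [mem_neighborSet, T2adj] at hq
                rcases hq with ⟨hq1, -⟩ | ⟨hq1, -⟩
                · exact hq1
                · rw [Sym2.eq_iff] at hq1
                  rcases hq1 with ⟨h1, -⟩ | ⟨h1, -⟩
                  · exact absurd h1 hua
                  · exact absurd h1 hub
              calc vdeg T2 u ≤ vdeg T u := Set.ncard_le_ncard hsub (Set.toFinite _)
                _ ≤ maxDeg T - 1 := by omega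
      obtain ⟨T3, hT3le, hT3⟩ := exists_spanning_tree (T2.edgeSet.ncard) T2 rfl hT2conn
      have hd3 : ∀ u : V, vdeg T3 u ≤ maxDeg T - 1 := fun u =>
        le_trans (Set.ncard_le_ncard (fun z hz => hT3le hz) (Set.toFinite _)) (hdeg2 u)
      have hmax3 : maxDeg T3 ≤ maxDeg T - 1 := by
        refine csSup_le ⟨vdeg T3 v, v, rfl⟩ ?_
        rintro n ⟨w, rfl⟩
        exact hd3 w
      have := hmin T3 (hT3le.trans hT2H) hT3
      omega
    -- components of H - v biject with components of T - v
    have hle2 : T.induce S ≤ H.induce S := by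
      intro p q hpq
      simp only [comap_adj, Function.Embedding.coe_subtype] at hpq ⊢
      exact hTle hpq
    have hcard : Nat.card ((H.induce S).ConnectedComponent)
        = Nat.card ((T.induce S).ConnectedComponent) := by
      refine (Nat.card_eq_of_bijective
        (ConnectedComponent.map (Hom.ofLE hle2)) ⟨?_, ?_⟩).symm
      · intro c d
        induction c using ConnectedComponent.ind with | _ p =>
        induction d using ConnectedComponent.ind with | _ q =>
        intro h
        rw [ConnectedComponent.map_mk, ConnectedComponent.map_mk] at h
        have hr := ConnectedComponent.exact h
        exact ConnectedComponent.sound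
          (reach_of_walk_adj (fun p' q' ha => crucial p' q' (by simpa using ha)) hr.some)
      · intro c
        exact c.ind fun u => ⟨(T.induce S).connectedComponentMk u, rfl⟩
    rw [hcard, cardT]
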